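/- Let N be a positive integer, p a prime not dividing N, and (k₁,…,k_r) a tuple of positive integers of weight k. Then in ZMod p one has Σ_{0 < m₁ < ⋯ < m_r < p} 1/(m₁^{k₁}⋯m_r^{k_r}) = N^k · Σ_{0 ≤ i₁ ≤ ⋯ ≤ i_{N−1} ≤ r} Π_{j=0}^{N−1} ( Σ_{0 < n₁ < ⋯ < n_{i_{j+1}−i_j} < p, each n_t ≡ −jp (mod N)} Π_{t=1}^{i_{j+1}−i_j} 1/n_t^{k_{i_j+t}} ), where i₀ := 0, i_N := r, the outer sum is over all weakly increasing tuples (i₁,…,i_{N−1}) of integers between 0 and r, and an empty inner sum (when i_j = i_{j+1}) is defined to be 1. -/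

import Mathlib

open Finset

open scoped Classical

/-- The level-`N` piece: the sum over strictly increasing tuples
`0 < n₁ < ⋯ < n_{b-a} < p` with every `n_t ≡ -jp (mod N)` of
`∏_t 1/n_t^{k(a+t)}` (the exponents being the entries of `k` in positions `a, a+1, …, b-1`),
as an element of `ZMod p`.  When `b = a` this is the empty sum of an empty product, i.e. `1`. -/
noncomputable def levelPiece (p N : ℕ) (k : ℕ → ℕ) (j a b : ℕ) : ZMod p :=
  ∑ n ∈ (Fintype.piFinset fun _ : Fin (b - a) => Finset.Ioo 0 p).filter
      (fun n : Fin (b - a) → ℕ => StrictMono n ∧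
        ∀ t, ((n t : ZMod N) = -((j : ZMod N) * (p : ZMod N)))),
    ∏ t, ((n t : ZMod p) ^ k (a + (t : ℕ)))⁻¹

/-- extension of a tuple by 0 -/
private def mEx {r : ℕ} (m : Fin r → ℕ) (a : ℕ) : ℕ :=
  if h : a < r then m ⟨a, h⟩ else 0

/-- the counting function: number of indices whose block is `< c`. -/
private def fOf (N p r : ℕ) (m : Fin r → ℕ) (c : ℕ) : ℕ :=
  ((Finset.univ : Finset (Fin r)).filter (fun i => N * m i / p < c)).card

private def fEx {N : ℕ} (f : Fin (N + 1) → ℕ) (c : ℕ) : ℕ :=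
  f ⟨min c N, by omega⟩

private def jOf {N : ℕ} (f : Fin (N + 1) → ℕ) (i : ℕ) : ℕ :=
  Nat.findGreatest (fun c => fEx f c ≤ i) N

private def nEx {N : ℕ} (f : Fin (N + 1) → ℕ)
    (n : ∀ j : Fin N, Fin (f j.succ - f j.castSucc) → ℕ) (j t : ℕ) : ℕ :=
  if h : j < N then
    if h2 : t < f (Fin.succ ⟨j, h⟩) - f (Fin.castSucc ⟨j, h⟩) then n ⟨j, h⟩ ⟨t, h2⟩ else 0
  else 0

private def Phi (N p r : ℕ) (m : Fin r → ℕ) :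
    (f : Fin (N + 1) → ℕ) × (∀ j : Fin N, Fin (f j.succ - f j.castSucc) → ℕ) :=
  ⟨fun c => fOf N p r m (c : ℕ), fun j t => N * mEx m (fOf N p r m (j : ℕ) + (t : ℕ)) % p⟩

private def Psi (N p : ℕ) {r : ℕ} (f : Fin (N + 1) → ℕ)
    (n : ∀ j : Fin N, Fin (f j.succ - f j.castSucc) → ℕ) (i : Fin r) : ℕ :=
  (jOf f (i : ℕ) * p + nEx f n (jOf f (i : ℕ)) ((i : ℕ) - fEx f (jOf f (i : ℕ)))) / N

private lemma fEx_eq {N : ℕ} (f : Fin (N + 1) → ℕ) {c : ℕ} (hc : c ≤ N) :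
    fEx f c = f ⟨c, by omega⟩ := by
  unfold fEx; congr 1; exact Fin.ext (by simp [Nat.min_eq_left hc])

private lemma fEx_castSucc {N : ℕ} (f : Fin (N + 1) → ℕ) {j : ℕ} (hj : j < N) :
    fEx f j = f (Fin.castSucc ⟨j, hj⟩) := by
  rw [fEx_eq f hj.le]; rfl

private lemma fEx_succ {N : ℕ} (f : Fin (N + 1) → ℕ) {j : ℕ} (hj : j < N) :
    fEx f (j + 1) = f (Fin.succ ⟨j, hj⟩) := by
  rw [fEx_eq f hj]; rfl

private lemma fEx_mono {N : ℕ} {f : Fin (N + 1) → ℕ} (hf : Monotone f) :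
    Monotone (fEx f) := by
  intro c c' hcc
  exact hf (by simp [Fin.le_def]; omega)

private lemma nEx_eq {N : ℕ} (f : Fin (N + 1) → ℕ)
    (n : ∀ j : Fin N, Fin (f j.succ - f j.castSucc) → ℕ) {j t : ℕ} (hj : j < N)
    (ht : t < f (Fin.succ ⟨j, hj⟩) - f (Fin.castSucc ⟨j, hj⟩)) :
    nEx f n j t = n ⟨j, hj⟩ ⟨t, ht⟩ := by
  unfold nEx; rw [dif_pos hj, dif_pos ht]

/-- count lemma for monotone functions on `Fin r` -/
private lemma count_lt_iff {r : ℕ} {g : Fin r → ℕ} (hg : Monotone g) (c : ℕ) (i : Fin r) :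
    (i : ℕ) < ((Finset.univ : Finset (Fin r)).filter (fun i' => g i' < c)).card ↔ g i < c := by
  constructor
  · intro h
    by_contra hc
    push_neg at hc
    have hsub : (Finset.univ : Finset (Fin r)).filter (fun i' => g i' < c) ⊆ Finset.Iio i := by
      intro i' hi'
      simp only [mem_filter, mem_univ, true_and] at hi'
      rw [Finset.mem_Iio]
      by_contra hle
      push_neg at hle
      exact absurd (lt_of_lt_of_le hi' (hc.trans (hg hle))) (lt_irrefl _)
    have := (Finset.card_le_card hsub).trans_eq (Fin.card_Iio i)
    omega
  · intro h
    have hsub : Finset.Iic i ⊆ (Finset.univ : Finset (Fin r)).filter (fun i' => g i' < c) := by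
      intro i' hi'
      rw [Finset.mem_Iic] at hi'
      simp only [mem_filter, mem_univ, true_and]
      exact lt_of_le_of_lt (hg hi') h
    have := Finset.card_le_card hsub
    rw [Fin.card_Iic] at this
    omega

private lemma card_val_lt {r a : ℕ} (ha : a ≤ r) :
    ((Finset.univ : Finset (Fin r)).filter (fun i : Fin r => (i : ℕ) < a)).card = a := by
  rcases eq_or_lt_of_le ha with rfl | h
  · rw [Finset.filter_true_of_mem (fun i _ => i.isLt), Finset.card_univ, Fintype.card_fin]
  · have : (Finset.univ : Finset (Fin r)).filter (fun i : Fin r => (i : ℕ) < a) = Finset.Iio ⟨a, h⟩ := by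
      ext i; simp [Fin.lt_def]
    rw [this, Fin.card_Iio]

private lemma prod_blocks {M : Type*} [CommMonoid M] (h : ℕ → M) (g : ℕ → ℕ) (hg : Monotone g) :
    ∀ n, ∏ j ∈ Finset.range n, ∏ a ∈ Finset.Ico (g j) (g (j + 1)), h a
      = ∏ a ∈ Finset.Ico (g 0) (g n), h a := by
  intro n
  induction n with
  | zero => simp
  | succ n ih =>
    rw [Finset.prod_range_succ, ih,
      Finset.prod_Ico_consecutive _ (hg (Nat.zero_le n)) (hg (Nat.le_succ n))]

private lemma single_forward {N p : ℕ} (hN : 0 < N) (hp : p.Prime) (hpN : ¬ p ∣ N)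
    {m : ℕ} (h0 : 0 < m) (h1 : m < p) :
    N * m / p < N ∧ 0 < N * m % p ∧ N * m % p < p ∧
      N * m = N * m / p * p + N * m % p ∧
      ((N * m % p : ℕ) : ZMod N) = -(((N * m / p : ℕ) : ZMod N) * (p : ZMod N)) := by
  have hp0 : 0 < p := hp.pos
  have hdiv : N * m / p < N := by
    rw [Nat.div_lt_iff_lt_mul hp0]
    exact Nat.mul_lt_mul_left hN |>.mpr h1
  have hmod1 : N * m % p < p := Nat.mod_lt _ hp0
  have hndvd : ¬ p ∣ N * m := by
    intro hd
    rcases (Nat.Prime.dvd_mul hp).1 hd with h | h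
    · exact hpN h
    · exact absurd (Nat.le_of_dvd h0 h) (by omega)
  have hmod0 : 0 < N * m % p := by
    rcases Nat.eq_zero_or_pos (N * m % p) with h | h
    · exact absurd (Nat.dvd_of_mod_eq_zero h) hndvd
    · exact h
  have heq : N * m = N * m / p * p + N * m % p := by
    rw [Nat.mul_comm (N * m / p) p]; exact (Nat.div_add_mod _ _).symm
  refine ⟨hdiv, hmod0, hmod1, heq, ?_⟩
  have : ((N * m : ℕ) : ZMod N) = 0 := by
    push_cast
    rw [ZMod.natCast_self, zero_mul]
  have h2 : ((N * m / p * p + N * m % p : ℕ) : ZMod N) = 0 := by rw [← heq]; exact this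
  push_cast at h2
  linear_combination h2

private lemma single_backward {N p : ℕ} (hN : 0 < N) (hp : p.Prime)
    {j n : ℕ} (hj : j < N) (hn0 : 0 < n) (hn1 : n < p)
    (hc : ((n : ℕ) : ZMod N) = -((j : ZMod N) * (p : ZMod N))) :
    0 < (j * p + n) / N ∧ (j * p + n) / N < p ∧ N * ((j * p + n) / N) = j * p + n := by
  haveI : NeZero N := ⟨hN.ne'⟩
  have hdvd : N ∣ j * p + n := by
    have : ((j * p + n : ℕ) : ZMod N) = 0 := by
      push_cast
      rw [hc]; ring
    exact (ZMod.natCast_eq_zero_iff _ _).1 this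
  have hmul : N * ((j * p + n) / N) = j * p + n := Nat.mul_div_cancel' hdvd
  have hpos : 0 < (j * p + n) / N := by
    rcases Nat.eq_zero_or_pos ((j * p + n) / N) with h | h
    · rw [h, Nat.mul_zero] at hmul; omega
    · exact h
  have hlt : (j * p + n) / N < p := by
    rw [Nat.div_lt_iff_lt_mul hN]
    calc j * p + n < (j + 1) * p := by nlinarith
    _ ≤ N * p := Nat.mul_le_mul_right p (by omega)
    _ = p * N := Nat.mul_comm _ _
  exact ⟨hpos, hlt, hmul⟩

private lemma jm_mono {N p r : ℕ} {m : Fin r → ℕ} (hm2 : StrictMono m) :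
    Monotone (fun i : Fin r => N * m i / p) := by
  intro i i' hii
  exact Nat.div_le_div_right (Nat.mul_le_mul_left N (hm2.monotone hii))

private lemma fOf_iff {N p r : ℕ} {m : Fin r → ℕ} (hm2 : StrictMono m) (c : ℕ) (i : Fin r) :
    (i : ℕ) < fOf N p r m c ↔ N * m i / p < c :=
  count_lt_iff (jm_mono hm2) c i

private lemma fOf_le {N p r : ℕ} {m : Fin r → ℕ} (c : ℕ) : fOf N p r m c ≤ r := by
  have := Finset.card_filter_le (Finset.univ : Finset (Fin r)) (fun i => N * m i / p < c)
  simpa [fOf, Finset.card_univ] using this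

private lemma fOf_zero {N p r : ℕ} {m : Fin r → ℕ} : fOf N p r m 0 = 0 := by
  unfold fOf
  simp

private lemma fOf_last {N p r c : ℕ} (hN : 0 < N) (hp : p.Prime) (hpN : ¬ p ∣ N)
    {m : Fin r → ℕ} (hm1 : ∀ i, 0 < m i ∧ m i < p) (hc : N ≤ c) : fOf N p r m c = r := by
  unfold fOf
  rw [Finset.filter_true_of_mem, Finset.card_univ, Fintype.card_fin]
  intro i _
  exact lt_of_lt_of_le (single_forward hN hp hpN (hm1 i).1 (hm1 i).2).1 hc

private lemma fOf_mono {N p r : ℕ} {m : Fin r → ℕ} : Monotone (fOf N p r m) := by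
  intro c c' hcc
  exact Finset.card_le_card (Finset.monotone_filter_right _
    (fun i _ h => lt_of_lt_of_le h hcc))

private lemma fOf_block {N p r : ℕ} {m : Fin r → ℕ} (hm2 : StrictMono m) (i : Fin r) :
    fOf N p r m (N * m i / p) ≤ (i : ℕ) ∧ (i : ℕ) < fOf N p r m (N * m i / p + 1) := by
  constructor
  · by_contra h
    push_neg at h
    exact absurd ((fOf_iff hm2 _ i).1 h) (lt_irrefl _)
  · exact (fOf_iff hm2 _ i).2 (Nat.lt_succ_self _)

private lemma fOf_block_mem {N p r : ℕ} {m : Fin r → ℕ} (hm2 : StrictMono m) {j t : ℕ}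
    (hj : j < N) (ht : t < fOf N p r m (j + 1) - fOf N p r m j) :
    ∃ h : fOf N p r m j + t < r, N * m ⟨fOf N p r m j + t, h⟩ / p = j := by
  have h1 : fOf N p r m j + t < fOf N p r m (j + 1) := by omega
  have hr : fOf N p r m j + t < r := lt_of_lt_of_le h1 (fOf_le _)
  refine ⟨hr, ?_⟩
  set i : Fin r := ⟨fOf N p r m j + t, hr⟩
  have hlt : N * m i / p < j + 1 := (fOf_iff hm2 _ i).1 h1
  have hge : ¬ ((i : ℕ) < fOf N p r m j) := by simp [i]
  rw [fOf_iff hm2] at hge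
  omega

private lemma fEx_zero {N r : ℕ} {f : Fin (N + 1) → ℕ} (hf0 : f 0 = 0) : fEx f 0 = 0 := by
  rw [fEx_eq f (Nat.zero_le N)]
  convert hf0 using 2
  exact Fin.ext (by simp)

private lemma fEx_last {N r : ℕ} {f : Fin (N + 1) → ℕ} (hfN : f (Fin.last N) = r) :
    fEx f N = r := by
  rw [fEx_eq f le_rfl]
  convert hfN using 2
  exact Fin.ext (by simp)

private lemma jOf_lt {N r : ℕ} (hN : 0 < N) {f : Fin (N + 1) → ℕ}
    (hf0 : f 0 = 0) (hfN : f (Fin.last N) = r) {i : ℕ} (hi : i < r) :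
    jOf f i < N ∧ fEx f (jOf f i) ≤ i ∧ i < fEx f (jOf f i + 1) := by
  have hP0 : fEx f 0 ≤ i := by rw [fEx_zero (r := r) hf0]; omega
  have hspec : fEx f (jOf f i) ≤ i :=
    Nat.findGreatest_spec (P := fun c => fEx f c ≤ i) (Nat.zero_le N) hP0
  have hle : jOf f i ≤ N := Nat.findGreatest_le N
  have hlt : jOf f i < N := by
    rcases eq_or_lt_of_le hle with h | h
    · exfalso
      rw [h, fEx_last (r := r) hfN] at hspec
      omega
    · exact h
  refine ⟨hlt, hspec, ?_⟩
  by_contra h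
  push_neg at h
  have hlt' : Nat.findGreatest (fun c => fEx f c ≤ i) N < N := hlt
  exact Nat.findGreatest_is_greatest (P := fun c => fEx f c ≤ i) (Nat.lt_succ_self _) (by omega) h

private lemma jOf_eq {N : ℕ} {f : Fin (N + 1) → ℕ} (hf : Monotone f) {i j : ℕ}
    (hj : j < N) (h1 : fEx f j ≤ i) (h2 : i < fEx f (j + 1)) : jOf f i = j := by
  refine le_antisymm ?_ (Nat.le_findGreatest hj.le h1)
  by_contra h
  push_neg at h
  have hspec : fEx f (jOf f i) ≤ i :=
    Nat.findGreatest_spec (P := fun c => fEx f c ≤ i) (m := j) (by omega) h1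
  have : fEx f (j + 1) ≤ fEx f (jOf f i) := fEx_mono hf (by omega)
  omega

private lemma Psi_spec {N p r : ℕ} (hN : 0 < N) (hp : p.Prime)
    {f : Fin (N + 1) → ℕ} {n : ∀ j : Fin N, Fin (f j.succ - f j.castSucc) → ℕ}
    (hf : Monotone f) (hf0 : f 0 = 0) (hfN : f (Fin.last N) = r)
    (hn1 : ∀ (j : Fin N) (t), 0 < n j t ∧ n j t < p)
    (hncong : ∀ (j : Fin N) (t), ((n j t : ℕ) : ZMod N) = -(((j : ℕ) : ZMod N) * (p : ZMod N)))
    (i : Fin r) :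
    0 < Psi N p f n i ∧ Psi N p f n i < p ∧
      N * Psi N p f n i = jOf f (i : ℕ) * p + nEx f n (jOf f (i : ℕ)) ((i : ℕ) - fEx f (jOf f (i : ℕ))) ∧
      0 < nEx f n (jOf f (i : ℕ)) ((i : ℕ) - fEx f (jOf f (i : ℕ))) ∧
      nEx f n (jOf f (i : ℕ)) ((i : ℕ) - fEx f (jOf f (i : ℕ))) < p ∧
      ((nEx f n (jOf f (i : ℕ)) ((i : ℕ) - fEx f (jOf f (i : ℕ))) : ℕ) : ZMod N)
        = -(((jOf f (i : ℕ) : ℕ) : ZMod N) * (p : ZMod N)) ∧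
      N * Psi N p f n i / p = jOf f (i : ℕ) ∧
      N * Psi N p f n i % p = nEx f n (jOf f (i : ℕ)) ((i : ℕ) - fEx f (jOf f (i : ℕ))) := by
  obtain ⟨hj, h1, h2⟩ := jOf_lt hN hf0 hfN i.isLt
  set j := jOf f (i : ℕ) with hjdef
  set t := (i : ℕ) - fEx f j with htdef
  have hbd : t < f (Fin.succ ⟨j, hj⟩) - f (Fin.castSucc ⟨j, hj⟩) := by
    rw [← fEx_succ f hj, ← fEx_castSucc f hj]
    omega
  have hnv : nEx f n j t = n ⟨j, hj⟩ ⟨t, hbd⟩ := nEx_eq f n hj hbd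
  have hv0 : 0 < nEx f n j t := by rw [hnv]; exact (hn1 _ _).1
  have hv1 : nEx f n j t < p := by rw [hnv]; exact (hn1 _ _).2
  have hvc : ((nEx f n j t : ℕ) : ZMod N) = -((j : ZMod N) * (p : ZMod N)) := by
    rw [hnv]; exact hncong ⟨j, hj⟩ _
  obtain ⟨hq0, hq1, hqe⟩ := single_backward hN hp hj hv0 hv1 hvc
  have hPsi : Psi N p f n i = (j * p + nEx f n j t) / N := rfl
  rw [hPsi]
  refine ⟨hq0, hq1, hqe, hv0, hv1, hvc, ?_, ?_⟩
  · rw [hqe, Nat.mul_comm j p, Nat.mul_add_div hp.pos, Nat.div_eq_of_lt hv1]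
    omega
  · rw [hqe, Nat.add_comm, Nat.add_mul_mod_self_right, Nat.mod_eq_of_lt hv1]

private lemma fEx_le_r {N r : ℕ} {f : Fin (N + 1) → ℕ} (hf : Monotone f)
    (hfN : f (Fin.last N) = r) (c : ℕ) : fEx f c ≤ r := by
  rw [← hfN]
  exact hf (Fin.le_last _)

private lemma fOf_Psi {N p r : ℕ} (hN : 0 < N) (hp : p.Prime)
    {f : Fin (N + 1) → ℕ} {n : ∀ j : Fin N, Fin (f j.succ - f j.castSucc) → ℕ}
    (hf : Monotone f) (hf0 : f 0 = 0) (hfN : f (Fin.last N) = r)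
    (hn1 : ∀ (j : Fin N) (t), 0 < n j t ∧ n j t < p)
    (hncong : ∀ (j : Fin N) (t), ((n j t : ℕ) : ZMod N) = -(((j : ℕ) : ZMod N) * (p : ZMod N)))
    {c : ℕ} (hc : c ≤ N) :
    fOf N p r (Psi N p f n) c = fEx f c := by
  unfold fOf
  have key : ∀ i : Fin r, (N * Psi N p f n i / p < c ↔ (i : ℕ) < fEx f c) := by
    intro i
    rw [(Psi_spec hN hp hf hf0 hfN hn1 hncong i).2.2.2.2.2.2.1]
    obtain ⟨hj, h1, h2⟩ := jOf_lt hN hf0 hfN i.isLt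
    constructor
    · intro h
      exact lt_of_lt_of_le h2 (fEx_mono hf (by omega))
    · intro h
      by_contra hcc
      push_neg at hcc
      exact absurd (lt_of_lt_of_le h ((fEx_mono hf hcc).trans h1)) (lt_irrefl _)
  rw [Finset.filter_congr (fun i _ => key i)]
  exact card_val_lt (fEx_le_r hf hfN c)

private lemma n_recover {N p r : ℕ} (hN : 0 < N) (hp : p.Prime)
    {f : Fin (N + 1) → ℕ} {n : ∀ j : Fin N, Fin (f j.succ - f j.castSucc) → ℕ}
    (hf : Monotone f) (hf0 : f 0 = 0) (hfN : f (Fin.last N) = r)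
    (hn1 : ∀ (j : Fin N) (t), 0 < n j t ∧ n j t < p)
    (hncong : ∀ (j : Fin N) (t), ((n j t : ℕ) : ZMod N) = -(((j : ℕ) : ZMod N) * (p : ZMod N)))
    (j : Fin N) (t : Fin (f j.succ - f j.castSucc)) (i : Fin r)
    (hi : (i : ℕ) = f j.castSucc + (t : ℕ)) :
    N * Psi N p f n i % p = n j t := by
  have hj : (j : ℕ) < N := j.isLt
  have hmk : (⟨(j : ℕ), hj⟩ : Fin N) = j := rfl
  have hcs : fEx f (j : ℕ) = f j.castSucc := by rw [fEx_castSucc f hj, hmk]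
  have hsc : fEx f ((j : ℕ) + 1) = f j.succ := by rw [fEx_succ f hj, hmk]
  have htlt : (t : ℕ) < f j.succ - f j.castSucc := t.isLt
  have h1 : fEx f (j : ℕ) ≤ (i : ℕ) := by omega
  have h2 : (i : ℕ) < fEx f ((j : ℕ) + 1) := by omega
  have hjof : jOf f (i : ℕ) = (j : ℕ) := jOf_eq hf hj h1 h2
  have hmod := (Psi_spec hN hp hf hf0 hfN hn1 hncong i).2.2.2.2.2.2.2
  rw [hmod, hjof]
  have hbd : (i : ℕ) - fEx f (j : ℕ) < f (Fin.succ ⟨(j : ℕ), hj⟩) - f (Fin.castSucc ⟨(j : ℕ), hj⟩) := by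
    rw [hmk]
    omega
  rw [nEx_eq f n hj hbd]
  exact congrArg (n j) (Fin.ext (show (i : ℕ) - fEx f (j : ℕ) = (t : ℕ) by omega))

private lemma nEx_lt {N : ℕ} {f : Fin (N + 1) → ℕ}
    {n : ∀ j : Fin N, Fin (f j.succ - f j.castSucc) → ℕ}
    (hnmono : ∀ j : Fin N, StrictMono (n j)) {j t t' : ℕ} (hj : j < N)
    (ht' : t' < f (Fin.succ ⟨j, hj⟩) - f (Fin.castSucc ⟨j, hj⟩)) (htt : t < t') :
    nEx f n j t < nEx f n j t' := by
  have ht : t < f (Fin.succ ⟨j, hj⟩) - f (Fin.castSucc ⟨j, hj⟩) := lt_trans htt ht'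
  rw [nEx_eq f n hj ht, nEx_eq f n hj ht']
  exact hnmono _ (Fin.mk_lt_mk.2 htt)

private lemma Psi_strictMono {N p r : ℕ} (hN : 0 < N) (hp : p.Prime)
    {f : Fin (N + 1) → ℕ} {n : ∀ j : Fin N, Fin (f j.succ - f j.castSucc) → ℕ}
    (hf : Monotone f) (hf0 : f 0 = 0) (hfN : f (Fin.last N) = r)
    (hn1 : ∀ (j : Fin N) (t), 0 < n j t ∧ n j t < p)
    (hncong : ∀ (j : Fin N) (t), ((n j t : ℕ) : ZMod N) = -(((j : ℕ) : ZMod N) * (p : ZMod N)))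
    (hnmono : ∀ j : Fin N, StrictMono (n j)) :
    StrictMono (Psi N p f n (r := r)) := by
  intro i i' hlt
  obtain ⟨hj, h1, h2⟩ := jOf_lt hN hf0 hfN i.isLt
  obtain ⟨hj', h1', h2'⟩ := jOf_lt hN hf0 hfN i'.isLt
  have heq := (Psi_spec hN hp hf hf0 hfN hn1 hncong i).2.2.1
  have heq' := (Psi_spec hN hp hf hf0 hfN hn1 hncong i').2.2.1
  have hv1 := (Psi_spec hN hp hf hf0 hfN hn1 hncong i).2.2.2.2.1
  have hjj : jOf f (i : ℕ) ≤ jOf f (i' : ℕ) :=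
    Nat.le_findGreatest hj.le (le_trans h1 (le_of_lt hlt))
  have hNlt : N * Psi N p f n i < N * Psi N p f n i' := by
    rcases eq_or_lt_of_le hjj with hjeq | hjlt
    · rw [← hjeq] at heq' h1' h2'
      have hbd' : (i' : ℕ) - fEx f (jOf f (i : ℕ)) <
          f (Fin.succ ⟨jOf f (i : ℕ), hj⟩) - f (Fin.castSucc ⟨jOf f (i : ℕ), hj⟩) := by
        rw [← fEx_succ f hj, ← fEx_castSucc f hj]
        omega
      have hnn : nEx f n (jOf f (i : ℕ)) ((i : ℕ) - fEx f (jOf f (i : ℕ))) <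
          nEx f n (jOf f (i : ℕ)) ((i' : ℕ) - fEx f (jOf f (i : ℕ))) := by
        refine nEx_lt hnmono hj hbd' ?_
        have : (i : ℕ) < (i' : ℕ) := hlt
        omega
      omega
    · rw [heq, heq']
      have hstep : (jOf f (i : ℕ) + 1) * p ≤ jOf f (i' : ℕ) * p :=
        Nat.mul_le_mul_right p (by omega)
      nlinarith
  exact lt_of_mul_lt_mul_left hNlt (Nat.zero_le N)

private lemma PhiF_mono {N p r : ℕ} {m : Fin r → ℕ} :
    Monotone (fun c : Fin (N + 1) => fOf N p r m (c : ℕ)) :=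
  fun _ _ h => fOf_mono h

private lemma fEx_PhiF {N p r : ℕ} {m : Fin r → ℕ} {c : ℕ} (hc : c ≤ N) :
    fEx (fun c : Fin (N + 1) => fOf N p r m (c : ℕ)) c = fOf N p r m c := by
  rw [fEx_eq _ hc]

private lemma jOf_fOf {N p r : ℕ} (hN : 0 < N) (hp : p.Prime) (hpN : ¬ p ∣ N)
    {m : Fin r → ℕ} (hm1 : ∀ i, 0 < m i ∧ m i < p) (hm2 : StrictMono m) (i : Fin r) :
    jOf (fun c : Fin (N + 1) => fOf N p r m (c : ℕ)) (i : ℕ) = N * m i / p := by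
  have hj : N * m i / p < N := (single_forward hN hp hpN (hm1 i).1 (hm1 i).2).1
  apply jOf_eq PhiF_mono hj
  · rw [fEx_PhiF hj.le]
    exact (fOf_block hm2 i).1
  · rw [fEx_PhiF hj]
    exact (fOf_block hm2 i).2

private lemma Psi_Phi {N p r : ℕ} (hN : 0 < N) (hp : p.Prime) (hpN : ¬ p ∣ N)
    {m : Fin r → ℕ} (hm1 : ∀ i, 0 < m i ∧ m i < p) (hm2 : StrictMono m) :
    Psi N p (Phi N p r m).1 (Phi N p r m).2 = m := by
  funext i
  have hj : N * m i / p < N := (single_forward hN hp hpN (hm1 i).1 (hm1 i).2).1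
  have hjof := jOf_fOf hN hp hpN hm1 hm2 i
  have hblock := fOf_block (N := N) (p := p) hm2 i
  show (jOf (fun c : Fin (N + 1) => fOf N p r m (c : ℕ)) (i : ℕ) * p +
      nEx _ (Phi N p r m).2 (jOf (fun c : Fin (N + 1) => fOf N p r m (c : ℕ)) (i : ℕ))
        ((i : ℕ) - fEx _ (jOf (fun c : Fin (N + 1) => fOf N p r m (c : ℕ)) (i : ℕ)))) / N = m i
  rw [hjof]
  have hfex : fEx (Phi N p r m).1 (N * m i / p) = fOf N p r m (N * m i / p) :=
    fEx_PhiF hj.le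
  rw [hfex]
  have hbd : (i : ℕ) - fOf N p r m (N * m i / p) <
      (Phi N p r m).1 (Fin.succ ⟨N * m i / p, hj⟩) -
        (Phi N p r m).1 (Fin.castSucc ⟨N * m i / p, hj⟩) := by
    show (i : ℕ) - fOf N p r m (N * m i / p) <
      fOf N p r m (N * m i / p + 1) - fOf N p r m (N * m i / p)
    omega
  rw [nEx_eq _ (Phi N p r m).2 hj hbd]
  have hval : (Phi N p r m).2 ⟨N * m i / p, hj⟩ ⟨(i : ℕ) - fOf N p r m (N * m i / p), hbd⟩
      = N * m i % p := by
    show N * mEx m (fOf N p r m (N * m i / p) + ((i : ℕ) - fOf N p r m (N * m i / p))) % p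
      = N * m i % p
    have : fOf N p r m (N * m i / p) + ((i : ℕ) - fOf N p r m (N * m i / p)) = (i : ℕ) := by
      omega
    rw [this]
    unfold mEx
    rw [dif_pos i.isLt]
  rw [hval]
  have heq := (single_forward hN hp hpN (hm1 i).1 (hm1 i).2).2.2.2.1
  rw [← heq]
  exact Nat.mul_div_cancel_left _ hN

private def TnD (N p : ℕ) (f : Fin (N + 1) → ℕ) :
    Finset (∀ j : Fin N, Fin (f j.succ - f j.castSucc) → ℕ) :=
  Fintype.piFinset (fun j : Fin N =>
    ((Fintype.piFinset fun _ : Fin (f j.succ - f j.castSucc) => Finset.Ioo 0 p)).filter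
      (fun n : Fin (f j.succ - f j.castSucc) → ℕ => StrictMono n ∧
        ∀ t, ((n t : ZMod N) = -(((j : ℕ) : ZMod N) * (p : ZMod N)))))

private lemma step1 (N p : ℕ) (k : ℕ → ℕ) (f : Fin (N + 1) → ℕ) :
    (∏ j : Fin N, levelPiece p N k (j : ℕ) (f j.castSucc) (f j.succ))
      = ∑ n ∈ TnD N p f, ∏ j : Fin N,
          ∏ t : Fin (f j.succ - f j.castSucc),
            ((n j t : ZMod p) ^ k (f j.castSucc + (t : ℕ)))⁻¹ := by
  simp only [levelPiece]
  rw [Finset.prod_univ_sum]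
  rfl


/-- **Proposition 2.4 ii), prime-by-prime.** For a prime `p` not dividing `N` and an index
`(k₀,…,k_{r-1})` of weight `k`, the truncated multiple harmonic sum
`Σ_{0<m₁<⋯<m_r<p} 1/(m₁^{k₀}⋯m_r^{k_{r-1}})` equals `N^k` times the sum, over all weakly
increasing tuples `0 = i₀ ≤ i₁ ≤ ⋯ ≤ i_{N-1} ≤ i_N = r` (encoded as monotone maps
`f : Fin (N+1) → ℕ` with `f 0 = 0` and `f N = r`), of the products over `j = 0,…,N-1` of the
level-`N` pieces attached to `j` on the segment of the index from position `i_j` to `i_{j+1}`,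
in `ZMod p`. -/
theorem levelDecomposition (N p : ℕ) (hN : 0 < N) (hp : p.Prime) (hpN : ¬ p ∣ N)
    (r : ℕ) (k : ℕ → ℕ) (hk : ∀ i < r, 0 < k i) :
    (∑ m ∈ (Fintype.piFinset fun _ : Fin r => Finset.Ioo 0 p).filter
        (fun m : Fin r → ℕ => StrictMono m),
      ∏ i, ((m i : ZMod p) ^ k (i : ℕ))⁻¹)
    = (N : ZMod p) ^ (∑ i ∈ Finset.range r, k i) *
      ∑ f ∈ (Fintype.piFinset fun _ : Fin (N + 1) => Finset.range (r + 1)).filter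
          (fun f : Fin (N + 1) → ℕ => Monotone f ∧ f 0 = 0 ∧ f (Fin.last N) = r),
        ∏ j : Fin N, levelPiece p N k (j : ℕ) (f j.castSucc) (f j.succ) := by
  haveI : NeZero N := ⟨hN.ne'⟩
  haveI : NeZero p := ⟨hp.pos.ne'⟩
  haveI : Fact p.Prime := ⟨hp⟩
  set F := (Fintype.piFinset fun _ : Fin (N + 1) => Finset.range (r + 1)).filter
      (fun f : Fin (N + 1) → ℕ => Monotone f ∧ f 0 = 0 ∧ f (Fin.last N) = r) with hF
  rw [Finset.sum_congr rfl (fun f _ => step1 N p k f)]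
  have step2 : (∑ x ∈ F.sigma (TnD N p), ∏ j : Fin N,
        ∏ t : Fin (x.1 j.succ - x.1 j.castSucc),
          ((x.2 j t : ZMod p) ^ k (x.1 j.castSucc + (t : ℕ)))⁻¹)
      = ∑ f ∈ F, ∑ n ∈ TnD N p f, ∏ j : Fin N,
          ∏ t : Fin (f j.succ - f j.castSucc),
            ((n j t : ZMod p) ^ k (f j.castSucc + (t : ℕ)))⁻¹ :=
    Finset.sum_sigma _ _ _
  rw [← step2, Finset.mul_sum]
  have unpack : ∀ x ∈ F.sigma (TnD N p), Monotone x.1 ∧ x.1 0 = 0 ∧ x.1 (Fin.last N) = r ∧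
      (∀ (j : Fin N) (t), 0 < x.2 j t ∧ x.2 j t < p) ∧
      (∀ (j : Fin N) (t), ((x.2 j t : ℕ) : ZMod N) = -(((j : ℕ) : ZMod N) * (p : ZMod N))) ∧
      (∀ j : Fin N, StrictMono (x.2 j)) := by
    intro x hx
    rw [Finset.mem_sigma] at hx
    obtain ⟨hx1, hx2⟩ := hx
    rw [hF, Finset.mem_filter] at hx1
    obtain ⟨-, hmono, h0, hlast⟩ := hx1
    simp only [TnD, Fintype.mem_piFinset, Finset.mem_filter] at hx2
    refine ⟨hmono, h0, hlast, ?_, ?_, ?_⟩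
    · intro j t
      have := (hx2 j).1 t
      rw [Finset.mem_Ioo] at this
      exact this
    · exact fun j => (hx2 j).2.2
    · exact fun j => (hx2 j).2.1
  refine (Finset.sum_bij (fun x _ => Psi N p x.1 x.2) ?_ ?_ ?_ ?_).symm
  · -- maps into S
    intro x hx
    obtain ⟨hmono, h0, hlast, hn1, hncong, hnmono⟩ := unpack x hx
    rw [Finset.mem_filter]
    constructor
    · rw [Fintype.mem_piFinset]
      intro i
      rw [Finset.mem_Ioo]
      exact ⟨(Psi_spec hN hp hmono h0 hlast hn1 hncong i).1,
        (Psi_spec hN hp hmono h0 hlast hn1 hncong i).2.1⟩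
    · exact Psi_strictMono hN hp hmono h0 hlast hn1 hncong hnmono
  · -- injective
    rintro ⟨f₁, n₁⟩ hx₁ ⟨f₂, n₂⟩ hx₂ heq
    obtain ⟨hmono1, h01, hlast1, hn11, hncong1, hnmono1⟩ := unpack _ hx₁
    obtain ⟨hmono2, h02, hlast2, hn12, hncong2, hnmono2⟩ := unpack _ hx₂
    simp only at heq hmono1 h01 hlast1 hn11 hncong1 hnmono1 hmono2 h02 hlast2 hn12 hncong2 hnmono2
    have hfeq : f₁ = f₂ := by
      funext j
      have hle : (j : ℕ) ≤ N := by omega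
      have e1 : fOf N p r (Psi N p f₁ n₁) (j : ℕ) = fEx f₁ (j : ℕ) :=
        fOf_Psi hN hp hmono1 h01 hlast1 hn11 hncong1 hle
      have e2 : fOf N p r (Psi N p f₂ n₂) (j : ℕ) = fEx f₂ (j : ℕ) :=
        fOf_Psi hN hp hmono2 h02 hlast2 hn12 hncong2 hle
      have e3 : fEx f₁ (j : ℕ) = fEx f₂ (j : ℕ) := by rw [← e1, ← e2, heq]
      rw [fEx_eq f₁ hle, fEx_eq f₂ hle] at e3
      exact e3
    subst hfeq
    have hneq : n₁ = n₂ := by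
      funext j t
      have hjr : f₁ j.succ ≤ r := by rw [← hlast1]; exact hmono1 (Fin.le_last _)
      have hir : f₁ j.castSucc + (t : ℕ) < r := by have := t.isLt; omega
      have e1 : N * Psi N p f₁ n₁ ⟨f₁ j.castSucc + (t : ℕ), hir⟩ % p = n₁ j t :=
        n_recover hN hp hmono1 h01 hlast1 hn11 hncong1 j t _ rfl
      have e2 : N * Psi N p f₁ n₂ ⟨f₁ j.castSucc + (t : ℕ), hir⟩ % p = n₂ j t :=
        n_recover hN hp hmono1 h01 hlast1 hn12 hncong2 j t _ rfl
      rw [← e1, ← e2, heq]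
    rw [hneq]
  · -- surjective
    intro m hm
    rw [Finset.mem_filter] at hm
    obtain ⟨hmm, hmsm⟩ := hm
    rw [Fintype.mem_piFinset] at hmm
    have hm1 : ∀ i, 0 < m i ∧ m i < p := by
      intro i
      have := hmm i
      rw [Finset.mem_Ioo] at this
      exact this
    refine ⟨Phi N p r m, ?_, Psi_Phi hN hp hpN hm1 hmsm⟩
    rw [Finset.mem_sigma]
    constructor
    · rw [hF, Finset.mem_filter]
      refine ⟨?_, ?_, ?_, ?_⟩
      · rw [Fintype.mem_piFinset]
        intro c
        rw [Finset.mem_range]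
        exact Nat.lt_succ_of_le (fOf_le _)
      · exact PhiF_mono
      · show fOf N p r m ((0 : Fin (N + 1)) : ℕ) = 0
        rw [Fin.val_zero]
        exact fOf_zero
      · show fOf N p r m ((Fin.last N : Fin (N + 1)) : ℕ) = r
        rw [Fin.val_last]
        exact fOf_last hN hp hpN hm1 le_rfl
    · simp only [TnD, Fintype.mem_piFinset, Finset.mem_filter]
      intro j
      have hval : ∀ t : Fin ((Phi N p r m).1 j.succ - (Phi N p r m).1 j.castSucc),
          ∃ h : fOf N p r m (j : ℕ) + (t : ℕ) < r,
            (Phi N p r m).2 j t = N * m ⟨fOf N p r m (j : ℕ) + (t : ℕ), h⟩ % p ∧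
              N * m ⟨fOf N p r m (j : ℕ) + (t : ℕ), h⟩ / p = (j : ℕ) := by
        intro t
        have ht : (t : ℕ) < fOf N p r m ((j : ℕ) + 1) - fOf N p r m (j : ℕ) := t.isLt
        obtain ⟨hvr, hjm⟩ := fOf_block_mem hmsm j.isLt ht
        refine ⟨hvr, ?_, hjm⟩
        show N * mEx m (fOf N p r m (j : ℕ) + (t : ℕ)) % p = _
        unfold mEx
        rw [dif_pos hvr]
      refine ⟨?_, ?_, ?_⟩
      · intro t
        obtain ⟨hvr, hveq, hjm⟩ := hval t
        rw [hveq, Finset.mem_Ioo]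
        exact ⟨(single_forward hN hp hpN (hm1 _).1 (hm1 _).2).2.1,
          (single_forward hN hp hpN (hm1 _).1 (hm1 _).2).2.2.1⟩
      · intro t t' htt
        obtain ⟨hvr, hveq, hjm⟩ := hval t
        obtain ⟨hvr', hveq', hjm'⟩ := hval t'
        rw [hveq, hveq']
        set i₀ : Fin r := ⟨fOf N p r m (j : ℕ) + (t : ℕ), hvr⟩
        set i₀' : Fin r := ⟨fOf N p r m (j : ℕ) + (t' : ℕ), hvr'⟩
        have hmlt : m i₀ < m i₀' := hmsm (Fin.mk_lt_mk.2 (by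
          have : (t : ℕ) < (t' : ℕ) := htt
          omega))
        have hNmlt : N * m i₀ < N * m i₀' := (Nat.mul_lt_mul_left hN).2 hmlt
        have ha := (single_forward hN hp hpN (hm1 i₀).1 (hm1 i₀).2).2.2.2.1
        have ha' := (single_forward hN hp hpN (hm1 i₀').1 (hm1 i₀').2).2.2.2.1
        have hq : N * m i₀ / p * p = N * m i₀' / p * p := by rw [hjm, hjm']
        omega
      · intro t
        obtain ⟨hvr, hveq, hjm⟩ := hval t
        rw [hveq]
        have := (single_forward hN hp hpN (hm1 ⟨fOf N p r m (j : ℕ) + (t : ℕ), hvr⟩).1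
          (hm1 ⟨fOf N p r m (j : ℕ) + (t : ℕ), hvr⟩).2).2.2.2.2
        rw [this, hjm]
  · -- summand equality
    rintro ⟨f, n⟩ ha
    obtain ⟨hmono, h0, hlast, hn1, hncong, hnmono⟩ := unpack _ ha
    simp only at hmono h0 hlast hn1 hncong hnmono ⊢
    have hNne : (N : ZMod p) ≠ 0 := fun h => hpN ((ZMod.natCast_eq_zero_iff N p).1 h)
    have key : ∀ i : Fin r, ((Psi N p f n i : ZMod p) ^ k (i : ℕ))⁻¹
        = (N : ZMod p) ^ k (i : ℕ)
          * (((N * Psi N p f n i % p : ℕ) : ZMod p) ^ k (i : ℕ))⁻¹ := by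
      intro i
      have hv : ((N * Psi N p f n i % p : ℕ) : ZMod p)
          = (N : ZMod p) * ((Psi N p f n i : ℕ) : ZMod p) := by
        rw [ZMod.natCast_mod]
        push_cast
        ring
      rw [hv, mul_pow, mul_inv, ← mul_assoc,
        mul_inv_cancel₀ (pow_ne_zero _ hNne), one_mul]
    have hjr : ∀ j : Fin N, f j.succ ≤ r := by
      intro j
      rw [← hlast]
      exact hmono (Fin.le_last _)
    classical
    set G : ℕ → ZMod p := fun a =>
      if h : a < r then (((N * Psi N p f n ⟨a, h⟩ % p : ℕ) : ZMod p) ^ k a)⁻¹ else 1 with hG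
    have hsplit : (∏ i : Fin r, ((Psi N p f n i : ZMod p) ^ k (i : ℕ))⁻¹)
        = (N : ZMod p) ^ (∑ i ∈ Finset.range r, k i) * ∏ a ∈ Finset.range r, G a := by
      rw [Finset.prod_congr rfl (fun i _ => key i), Finset.prod_mul_distrib,
        Finset.prod_pow_eq_pow_sum]
      congr 1
      · congr 1
        exact Fin.sum_univ_eq_sum_range k r
      · rw [← Fin.prod_univ_eq_prod_range G r]
        apply Finset.prod_congr rfl
        intro i _
        rw [hG]
        simp only
        rw [dif_pos i.isLt]
    have hinner : ∀ j : Fin N,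
        (∏ t : Fin (f j.succ - f j.castSucc), ((n j t : ZMod p) ^ k (f j.castSucc + (t : ℕ)))⁻¹)
          = ∏ a ∈ Finset.Ico (fEx f (j : ℕ)) (fEx f ((j : ℕ) + 1)), G a := by
      intro j
      have hcs : fEx f (j : ℕ) = f j.castSucc := fEx_castSucc f j.isLt
      have hsc : fEx f ((j : ℕ) + 1) = f j.succ := fEx_succ f j.isLt
      rw [hcs, hsc, Finset.prod_Ico_eq_prod_range,
        ← Fin.prod_univ_eq_prod_range (fun a => G (f j.castSucc + a)) (f j.succ - f j.castSucc)]
      apply Finset.prod_congr rfl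
      intro t _
      have hir : f j.castSucc + (t : ℕ) < r := by have := t.isLt; have := hjr j; omega
      have hGv : G (f j.castSucc + (t : ℕ))
          = (((N * Psi N p f n ⟨f j.castSucc + (t : ℕ), hir⟩ % p : ℕ) : ZMod p)
              ^ k (f j.castSucc + (t : ℕ)))⁻¹ := by
        rw [hG]
        simp only
        rw [dif_pos hir]
      rw [hGv, n_recover hN hp hmono h0 hlast hn1 hncong j t _ rfl]
    have houter : (∏ j : Fin N, ∏ a ∈ Finset.Ico (fEx f (j : ℕ)) (fEx f ((j : ℕ) + 1)), G a)
        = ∏ a ∈ Finset.range r, G a := by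
      rw [Fin.prod_univ_eq_prod_range (fun c => ∏ a ∈ Finset.Ico (fEx f c) (fEx f (c + 1)), G a) N,
        prod_blocks G (fEx f) (fEx_mono hmono) N, fEx_zero (r := r) h0, fEx_last hlast,
        Nat.Ico_zero_eq_range]
    rw [Finset.prod_congr rfl (fun j _ => hinner j), houter, hsplit]
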